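/- Let (λ_m)_{m≥1} be a sequence of positive reals with liminf_{m→∞} λ_m/m > 10. For every L* ∈ [0,1/2) and every L' with L* ≤ L' < 1/2, there exist a measurable space X (one may take X = {0,1}^ℕ with the product σ-algebra), a probability measure D on X × {0,1}, and a hypothesis class consisting of two measurable predictors h_0, h_1 with prior π(h_0) = 0.1, π(h_1) = 0.9, L(h_0) = L*, and L(h_1) = L', such that for every sequence (A_m)_{m≥1} in which A_m is an MDL_{λ_m} selection rule for sample size m, E_{S~D^m}[L(A_m(S))] → L' as m → ∞. -/

import Mathlib

open MeasureTheory Filter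

noncomputable def binEnt (p : ℝ) : ℝ :=
  -(p * Real.logb 2 p) - (1 - p) * Real.logb 2 (1 - p)

noncomputable def klBin (a b : ℝ) : ℝ :=
  a * Real.logb 2 (a / b) + (1 - a) * Real.logb 2 ((1 - a) / (1 - b))

structure LearningSetup (X : Type) [MeasurableSpace X] (I : Type) where
  countable : Countable I
  D : Measure (X × Bool)
  isProb : IsProbabilityMeasure D
  hyp : I → X → Bool
  hyp_measurable : ∀ i, Measurable (hyp i)
  prior : I → ℝ
  prior_nonneg : ∀ i, 0 ≤ prior i
  prior_le_one : ∀ i, prior i ≤ 1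
  prior_tsum_le_one : ∑' i, ENNReal.ofReal (prior i) ≤ 1

namespace LearningSetup

variable {X I : Type} [MeasurableSpace X] (L : LearningSetup X I)

/-- Description length `|i|_π = -log₂ π(i)`. -/
noncomputable def desc (i : I) : ℝ := -Real.logb 2 (L.prior i)

/-- Population error `L(i)`. -/
noncomputable def popErr (i : I) : ℝ := (L.D {p | L.hyp i p.1 ≠ p.2}).toReal

/-- Number of sample errors `m · L_S(i)`. -/
def errCount (m : ℕ) (i : I) (S : Fin m → X × Bool) : ℕ :=
  (Finset.univ.filter fun t => L.hyp i (S t).1 ≠ (S t).2).card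

/-- Empirical error `L_S(i)`. -/
noncomputable def empErr (m : ℕ) (i : I) (S : Fin m → X × Bool) : ℝ :=
  (L.errCount m i S : ℝ) / (m : ℝ)

/-- MDL objective `J_λ(i, S) = λ·|i|_π + log₂ C(m, m·L_S(i))`. -/
noncomputable def J (lam : ℝ) (m : ℕ) (i : I) (S : Fin m → X × Bool) : ℝ :=
  lam * L.desc i + Real.logb 2 (m.choose (L.errCount m i S) : ℝ)

/-- The m-fold product measure `D^m`. -/
noncomputable def sampleMeasure (m : ℕ) : Measure (Fin m → X × Bool) :=
  haveI := L.isProb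
  Measure.pi fun _ => L.D

/-- `A` is an MDL_λ selection rule for sample size `m`. -/
def IsMDLRule (lam : ℝ) (m : ℕ) (A : (Fin m → X × Bool) → I) : Prop :=
  (@Measurable (Fin m → X × Bool) I inferInstance ⊤ A) ∧
  ∀ᵐ S ∂ L.sampleMeasure m,
    L.empErr m (A S) S ≤ 1 / 2 ∧
    ∀ i : I, L.empErr m i S ≤ 1 / 2 → L.J lam m (A S) S ≤ L.J lam m i S

/-- Expected population error `E_{S ~ D^m}[L(A(S))]`. -/
noncomputable def expectedRisk (m : ℕ) (A : (Fin m → X × Bool) → I) : ℝ :=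
  ∫ S, L.popErr (A S) ∂ L.sampleMeasure m

end LearningSetup

/-! ### Auxiliary lemmas -/

section PiLemmas

variable {α : Type*} [MeasurableSpace α] (μ : Measure α) [IsProbabilityMeasure μ]

lemma MDLaux.pi_eval_pre {m : ℕ} (B : Set α) (s : Fin m) :
    Measure.pi (fun _ : Fin m => μ) (Function.eval s ⁻¹' B) = μ B := by
  classical
  rw [Set.eval_preimage, Measure.pi_pi]
  rw [Finset.prod_eq_single s]
  · simp
  · intro b _ hb; simp [Function.update_of_ne hb]
  · simp

lemma MDLaux.pi_eval_pre_inter {m : ℕ} (B : Set α) (s t : Fin m)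
    (hst : s ≠ t) :
    Measure.pi (fun _ : Fin m => μ) (Function.eval s ⁻¹' B ∩ Function.eval t ⁻¹' B)
      = μ B * μ B := by
  classical
  rw [Set.eval_preimage, Set.eval_preimage, ← Set.pi_inter_distrib, Measure.pi_pi]
  have key : ∀ j : Fin m,
      μ (Function.update (fun _ => Set.univ) s B j ∩ Function.update (fun _ => Set.univ) t B j)
      = if j = s ∨ j = t then μ B else 1 := by
    intro j
    by_cases hjs : j = s
    · subst hjs
      simp [Function.update_of_ne hst]
    · by_cases hjt : j = t
      · subst hjt
        simp [Function.update_of_ne hjs, Function.update_of_ne (Ne.symm hst)]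
      · simp [Function.update_of_ne hjs, Function.update_of_ne hjt, hjs, hjt]
  rw [Finset.prod_congr rfl (fun j _ => key j)]
  rw [← Finset.mul_prod_erase Finset.univ _ (Finset.mem_univ s)]
  rw [← Finset.mul_prod_erase _ _ (Finset.mem_erase.2 ⟨Ne.symm hst, Finset.mem_univ t⟩)]
  rw [if_pos (Or.inl rfl), if_pos (Or.inr rfl)]
  rw [Finset.prod_eq_one, mul_one]
  intro j hj
  simp only [Finset.mem_erase] at hj
  rw [if_neg]; push_neg; exact ⟨hj.2.1, hj.1⟩

variable {m : ℕ} (B : Set α)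

lemma MDLaux.ind_meas (hB : MeasurableSet B) (s : Fin m) :
    Measurable fun S : Fin m → α => B.indicator (1 : α → ℝ) (S s) :=
  (measurable_one.indicator hB).comp (measurable_pi_apply s)

lemma MDLaux.bdd_integrable {f : (Fin m → α) → ℝ} (hf : Measurable f) (C : ℝ)
    (hC : ∀ S, |f S| ≤ C) : Integrable f (Measure.pi fun _ : Fin m => μ) :=
  Integrable.mono' (integrable_const C) hf.aestronglyMeasurable (Filter.Eventually.of_forall hC)

lemma MDLaux.ind_abs_le (x : α) : |B.indicator (1 : α → ℝ) x| ≤ 1 := by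
  by_cases h : x ∈ B <;> simp [Set.indicator_apply, h]

open MDLaux in
lemma MDLaux.pair_integral (hB : MeasurableSet B) (s t : Fin m) :
    ∫ S, (B.indicator (1:α→ℝ) (S s) - (μ B).toReal) * (B.indicator (1:α→ℝ) (S t) - (μ B).toReal)
      ∂(Measure.pi fun _ : Fin m => μ)
      = if s = t then (μ B).toReal - (μ B).toReal ^ 2 else 0 := by
  classical
  set b := (μ B).toReal with hb
  set ν := Measure.pi fun _ : Fin m => μ with hν
  have hbnn : 0 ≤ b := ENNReal.toReal_nonneg
  have hble : b ≤ 1 := by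
    rw [hb]; exact ENNReal.toReal_le_of_le_ofReal one_pos.le (by simpa using prob_le_one)
  have hmeas := fun u : Fin m => ind_meas B hB u
  have hint1 : ∀ u : Fin m, Integrable (fun S : Fin m → α => B.indicator (1:α→ℝ) (S u)) ν :=
    fun u => bdd_integrable μ (hmeas u) 1 (fun S => ind_abs_le B _)
  have hintp : Integrable (fun S : Fin m → α =>
      B.indicator (1:α→ℝ) (S s) * B.indicator (1:α→ℝ) (S t)) ν := by
    refine bdd_integrable μ ((hmeas s).mul (hmeas t)) 1 fun S => ?_
    rw [abs_mul]
    exact mul_le_one₀ (ind_abs_le B _) (abs_nonneg _) (ind_abs_le B _)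
  have hL1 : ∀ u : Fin m, ∫ S, B.indicator (1:α→ℝ) (S u) ∂ν = b := by
    intro u
    have : (fun S : Fin m → α => B.indicator (1:α→ℝ) (S u))
        = (Function.eval u ⁻¹' B).indicator (1 : (Fin m → α) → ℝ) := by
      funext S; by_cases h : S u ∈ B <;> simp [Set.indicator_apply, h]
    rw [this, integral_indicator_one (hB.preimage (measurable_pi_apply u)), measureReal_def, pi_eval_pre μ B u]
  have hexp : (fun S : Fin m → α =>
      (B.indicator (1:α→ℝ) (S s) - b) * (B.indicator (1:α→ℝ) (S t) - b))
      = fun S => B.indicator (1:α→ℝ) (S s) * B.indicator (1:α→ℝ) (S t)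
          - b * B.indicator (1:α→ℝ) (S t) - b * B.indicator (1:α→ℝ) (S s) + b * b := by
    funext S; ring
  rw [hexp, integral_add, integral_sub, integral_sub, integral_const_mul, integral_const_mul,
    hL1, hL1, integral_const]
  · have hmu : (ν Set.univ).toReal = 1 := by simp [hν]
    have hprod : ∫ S, B.indicator (1:α→ℝ) (S s) * B.indicator (1:α→ℝ) (S t) ∂ν
        = if s = t then b else b * b := by
      by_cases hst : s = t
      · subst hst
        rw [if_pos rfl, ← hL1 s]
        congr 1; funext S
        by_cases h : S s ∈ B <;> simp [Set.indicator_apply, h]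
      · rw [if_neg hst]
        have : (fun S : Fin m → α => B.indicator (1:α→ℝ) (S s) * B.indicator (1:α→ℝ) (S t))
            = (Function.eval s ⁻¹' B ∩ Function.eval t ⁻¹' B).indicator (1 : (Fin m → α) → ℝ) := by
          funext S
          by_cases h1 : S s ∈ B <;> by_cases h2 : S t ∈ B <;>
            simp [Set.indicator_apply, h1, h2]
        rw [this, integral_indicator_one
          (((hB.preimage (measurable_pi_apply s))).inter (hB.preimage (measurable_pi_apply t))),
          measureReal_def, pi_eval_pre_inter μ B s t hst, ENNReal.toReal_mul]
    rw [hprod]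
    by_cases hst : s = t <;> simp [hst, hmu, measureReal_def] <;> ring
  · exact hintp
  · exact (hint1 t).const_mul b
  · exact ((hintp.sub ((hint1 t).const_mul b)))
  · exact (hint1 s).const_mul b
  · exact (((hintp.sub ((hint1 t).const_mul b))).sub ((hint1 s).const_mul b))
  · exact integrable_const _

open MDLaux in
lemma MDLaux.var_sum (hB : MeasurableSet B) :
    ∫ S, ((∑ t : Fin m, B.indicator (1:α→ℝ) (S t)) - m * (μ B).toReal) ^ 2
      ∂(Measure.pi fun _ : Fin m => μ)
      = m * ((μ B).toReal - (μ B).toReal ^ 2) := by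
  classical
  set b := (μ B).toReal with hb
  have hrw : ∀ S : Fin m → α,
      ((∑ t : Fin m, B.indicator (1:α→ℝ) (S t)) - m * b) ^ 2
      = ∑ s : Fin m, ∑ t : Fin m,
          (B.indicator (1:α→ℝ) (S s) - b) * (B.indicator (1:α→ℝ) (S t) - b) := by
    intro S
    rw [← Finset.sum_mul_sum]
    have : (∑ t : Fin m, (B.indicator (1:α→ℝ) (S t) - b))
        = (∑ t : Fin m, B.indicator (1:α→ℝ) (S t)) - m * b := by
      rw [Finset.sum_sub_distrib]; simp [mul_comm]
    rw [this, sq]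
  simp_rw [hrw]
  rw [integral_finset_sum]
  · have key : ∀ s : Fin m, ∫ S, ∑ t : Fin m,
        (B.indicator (1:α→ℝ) (S s) - b) * (B.indicator (1:α→ℝ) (S t) - b)
        ∂(Measure.pi fun _ : Fin m => μ)
        = ∑ t : Fin m, if s = t then b - b ^ 2 else 0 := by
      intro s
      rw [integral_finset_sum]
      · exact Finset.sum_congr rfl fun t _ => pair_integral μ B hB s t
      · intro t _
        refine bdd_integrable μ (((ind_meas B hB s).sub measurable_const).mul
          ((ind_meas B hB t).sub measurable_const)) 4 fun S => ?_
        rw [abs_mul]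
        have h1 : ∀ u : Fin m, |B.indicator (1:α→ℝ) (S u) - b| ≤ 2 := by
          intro u
          calc |B.indicator (1:α→ℝ) (S u) - b| ≤ |B.indicator (1:α→ℝ) (S u)| + |b| :=
              abs_sub _ _
            _ ≤ 1 + 1 := by
                refine add_le_add (ind_abs_le B _) ?_
                rw [abs_of_nonneg ENNReal.toReal_nonneg]
                exact ENNReal.toReal_le_of_le_ofReal one_pos.le (by simpa using prob_le_one)
            _ = 2 := by norm_num
        calc |B.indicator (1:α→ℝ) (S s) - b| * |B.indicator (1:α→ℝ) (S t) - b|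
            ≤ 2 * 2 := mul_le_mul (h1 s) (h1 t) (abs_nonneg _) (by norm_num)
          _ = 4 := by norm_num
    simp_rw [key]
    simp [Finset.sum_ite_eq]; ring
  · intro s _
    refine bdd_integrable μ ?_ (4 * m) fun S => ?_
    · exact Finset.measurable_sum _ fun t _ =>
        (((ind_meas B hB s).sub measurable_const).mul ((ind_meas B hB t).sub measurable_const))
    · have h1 : ∀ u : Fin m, |B.indicator (1:α→ℝ) (S u) - b| ≤ 2 := by
        intro u
        calc |B.indicator (1:α→ℝ) (S u) - b| ≤ |B.indicator (1:α→ℝ) (S u)| + |b| :=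
            abs_sub _ _
          _ ≤ 1 + 1 := by
              refine add_le_add (ind_abs_le B _) ?_
              rw [abs_of_nonneg ENNReal.toReal_nonneg]
              exact ENNReal.toReal_le_of_le_ofReal one_pos.le (by simpa using prob_le_one)
          _ = 2 := by norm_num
      calc |∑ t : Fin m, (B.indicator (1:α→ℝ) (S s) - b) * (B.indicator (1:α→ℝ) (S t) - b)|
          ≤ ∑ t : Fin m, |(B.indicator (1:α→ℝ) (S s) - b) * (B.indicator (1:α→ℝ) (S t) - b)| :=
            Finset.abs_sum_le_sum_abs _ _
        _ ≤ ∑ _t : Fin m, (4:ℝ) := by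
            refine Finset.sum_le_sum fun t _ => ?_
            rw [abs_mul]
            calc |B.indicator (1:α→ℝ) (S s) - b| * |B.indicator (1:α→ℝ) (S t) - b|
                ≤ 2 * 2 := mul_le_mul (h1 s) (h1 t) (abs_nonneg _) (by norm_num)
              _ = 4 := by norm_num
        _ = 4 * m := by simp [mul_comm]

open MDLaux in
/-- Chebyshev bound for the upper tail of a sum of i.i.d. indicators. -/
lemma MDLaux.cheb (hB : MeasurableSet B) (hm : 1 ≤ m) (hb2 : (μ B).toReal < 1/2) :
    ((Measure.pi fun _ : Fin m => μ)
      {S | (m:ℝ)/2 < ∑ t : Fin m, B.indicator (1:α→ℝ) (S t)}).toReal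
      ≤ 1 / (m * (1/2 - (μ B).toReal)^2) := by
  classical
  set b := (μ B).toReal with hbdef
  have hδ : (0:ℝ) < 1/2 - b := by linarith
  have hbnn : 0 ≤ b := ENNReal.toReal_nonneg
  have hble : b ≤ 1 := by
    rw [hbdef]; exact ENNReal.toReal_le_of_le_ofReal one_pos.le (by simpa using prob_le_one)
  set ν := Measure.pi fun _ : Fin m => μ with hν
  have hmpos : (0:ℝ) < m := by exact_mod_cast hm
  set bad : Set (Fin m → α) := {S | (m:ℝ)/2 < ∑ t : Fin m, B.indicator (1:α→ℝ) (S t)} with hbad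
  have hsummeas : Measurable fun S : Fin m → α => ∑ t : Fin m, B.indicator (1:α→ℝ) (S t) :=
    Finset.measurable_sum _ fun t _ => ind_meas B hB t
  have hbadmeas : MeasurableSet bad := hsummeas measurableSet_Ioi
  have hg : Integrable
      (fun S : Fin m → α => ((∑ t : Fin m, B.indicator (1:α→ℝ) (S t)) - m * b) ^ 2) ν := by
    refine bdd_integrable μ ((hsummeas.sub measurable_const).pow measurable_const) ((2*m)^2)
      fun S => ?_
    rw [abs_of_nonneg (sq_nonneg _)]
    have hS1 : |(∑ t : Fin m, B.indicator (1:α→ℝ) (S t)) - m * b| ≤ 2 * m := by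
      calc |(∑ t : Fin m, B.indicator (1:α→ℝ) (S t)) - m * b|
          ≤ |∑ t : Fin m, B.indicator (1:α→ℝ) (S t)| + |(m:ℝ) * b| := abs_sub _ _
        _ ≤ m + m := by
            refine add_le_add ?_ ?_
            · refine (Finset.abs_sum_le_sum_abs _ _).trans ?_
              calc ∑ t : Fin m, |B.indicator (1:α→ℝ) (S t)| ≤ ∑ _t : Fin m, (1:ℝ) :=
                  Finset.sum_le_sum fun t _ => ind_abs_le B _
                _ = m := by simp
            · rw [abs_of_nonneg (by positivity)]
              nlinarith
        _ = 2 * m := by ring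
    calc ((∑ t : Fin m, B.indicator (1:α→ℝ) (S t)) - m * b) ^ 2
        = |(∑ t : Fin m, B.indicator (1:α→ℝ) (S t)) - m * b| ^ 2 := (sq_abs _).symm
      _ ≤ (2*m)^2 := pow_le_pow_left₀ (abs_nonneg _) hS1 2
  have hlower : ∀ S : Fin m → α,
      bad.indicator (fun _ => ((m:ℝ)*(1/2 - b))^2) S
      ≤ ((∑ t : Fin m, B.indicator (1:α→ℝ) (S t)) - m * b) ^ 2 := by
    intro S
    by_cases hS : S ∈ bad
    · rw [Set.indicator_of_mem hS]
      have h1 : (m:ℝ)/2 < ∑ t : Fin m, B.indicator (1:α→ℝ) (S t) := hS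
      have h2 : (m:ℝ)*(1/2 - b) ≤ (∑ t : Fin m, B.indicator (1:α→ℝ) (S t)) - m * b := by
        nlinarith
      have h3 : (0:ℝ) ≤ (m:ℝ)*(1/2 - b) := by positivity
      nlinarith [mul_nonneg (sub_nonneg.2 h2)
        (by linarith : (0:ℝ) ≤ ((∑ t : Fin m, B.indicator (1:α→ℝ) (S t)) - m * b)
          + (m:ℝ)*(1/2 - b))]
    · rw [Set.indicator_of_notMem hS]
      positivity
  have hmarkov : ((m:ℝ)*(1/2 - b))^2 * (ν bad).toReal ≤ m * (b - b^2) := by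
    have h1 : ∫ S, bad.indicator (fun _ => ((m:ℝ)*(1/2 - b))^2) S ∂ν
        ≤ ∫ S, ((∑ t : Fin m, B.indicator (1:α→ℝ) (S t)) - m * b) ^ 2 ∂ν := by
      refine integral_mono ?_ hg hlower
      exact (integrable_const _).indicator hbadmeas
    rw [integral_indicator_const _ hbadmeas, var_sum μ B hB] at h1
    simpa [smul_eq_mul, mul_comm, measureReal_def] using h1
  have hvb : (m:ℝ) * (b - b^2) ≤ m := by nlinarith
  have hfin : ((m:ℝ)*(1/2 - b))^2 * (ν bad).toReal ≤ m := hmarkov.trans hvb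
  have hpos : (0:ℝ) < ((m:ℝ)*(1/2 - b))^2 := by positivity
  have hstep : (ν bad).toReal ≤ (m:ℝ) / ((m:ℝ)*(1/2 - b))^2 := by
    rw [le_div_iff₀ hpos]; linarith
  have heq : (m:ℝ) / ((m:ℝ)*(1/2 - b))^2 = 1 / ((m:ℝ) * (1/2 - b)^2) := by
    rw [mul_pow, sq (m:ℝ), mul_assoc]
    rw [div_mul_eq_div_div, div_self hmpos.ne']
  rw [heq] at hstep
  exact hstep

end PiLemmas

/-! ### The concrete learning setup -/

namespace MDLaux

noncomputable def bmeas (a b : ℝ) : Measure ((Bool × Bool) × Bool) :=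
  ENNReal.ofReal ((1-a)*(1-b)) • Measure.dirac ((false,false),false)
  + ENNReal.ofReal ((1-a)*b) • Measure.dirac ((false,true),false)
  + ENNReal.ofReal (a*(1-b)) • Measure.dirac ((true,false),false)
  + ENNReal.ofReal (a*b) • Measure.dirac ((true,true),false)

lemma bmeas_apply (a b : ℝ) (s : Set ((Bool × Bool) × Bool)) :
    bmeas a b s = ENNReal.ofReal ((1-a)*(1-b)) * s.indicator 1 ((false,false),false)
      + ENNReal.ofReal ((1-a)*b) * s.indicator 1 ((false,true),false)
      + ENNReal.ofReal (a*(1-b)) * s.indicator 1 ((true,false),false)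
      + ENNReal.ofReal (a*b) * s.indicator 1 ((true,true),false) := by
  simp [bmeas, Measure.add_apply, Measure.smul_apply, Measure.dirac_apply, smul_eq_mul]

lemma bmeas_univ (a b : ℝ) (ha : 0 ≤ a) (ha1 : a ≤ 1) (hb : 0 ≤ b) (hb1 : b ≤ 1) :
    bmeas a b Set.univ = 1 := by
  rw [bmeas_apply]
  simp only [Set.indicator_of_mem (Set.mem_univ _), Pi.one_apply, mul_one]
  have h1 : (0:ℝ) ≤ (1-a)*(1-b) := mul_nonneg (by linarith) (by linarith)
  have h2 : (0:ℝ) ≤ (1-a)*b := mul_nonneg (by linarith) hb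
  have h3 : (0:ℝ) ≤ a*(1-b) := mul_nonneg ha (by linarith)
  have h4 : (0:ℝ) ≤ a*b := mul_nonneg ha hb
  rw [← ENNReal.ofReal_add h1 h2, ← ENNReal.ofReal_add (by linarith) h3,
    ← ENNReal.ofReal_add (by linarith) h4]
  norm_num
  ring

lemma bmeas_err0 (a b : ℝ) (ha : 0 ≤ a) (hb : 0 ≤ b) (hb1 : b ≤ 1) :
    bmeas a b {p | p.1.1 ≠ p.2} = ENNReal.ofReal a := by
  rw [bmeas_apply]
  have h3 : (0:ℝ) ≤ a*(1-b) := mul_nonneg ha (by linarith)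
  have h4 : (0:ℝ) ≤ a*b := mul_nonneg ha hb
  rw [Set.indicator_of_notMem (by simp), Set.indicator_of_notMem (by simp),
    Set.indicator_of_mem (by simp), Set.indicator_of_mem (by simp)]
  simp only [Pi.one_apply, mul_one, mul_zero, zero_add]
  rw [← ENNReal.ofReal_add h3 h4]
  ring_nf

lemma bmeas_err1 (a b : ℝ) (ha : 0 ≤ a) (ha1 : a ≤ 1) (hb : 0 ≤ b) :
    bmeas a b {p | p.1.2 ≠ p.2} = ENNReal.ofReal b := by
  rw [bmeas_apply]
  have h2 : (0:ℝ) ≤ (1-a)*b := mul_nonneg (by linarith) hb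
  have h4 : (0:ℝ) ≤ a*b := mul_nonneg ha hb
  rw [Set.indicator_of_notMem (by simp), Set.indicator_of_mem (by simp),
    Set.indicator_of_notMem (by simp), Set.indicator_of_mem (by simp)]
  simp only [Pi.one_apply, mul_one, mul_zero, zero_add, add_zero]
  rw [← ENNReal.ofReal_add h2 h4]
  ring_nf

lemma meas_discrete {β : Type*} [MeasurableSpace β] (f : (Bool × Bool) × Bool → β)
    : Measurable f := by
  exact Measurable.of_discrete (f := f)

noncomputable def setup (a b : ℝ) (ha : 0 ≤ a) (ha1 : a ≤ 1) (hb : 0 ≤ b) (hb1 : b ≤ 1) :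
    LearningSetup (Bool × Bool) (Fin 2) where
  countable := inferInstance
  D := bmeas a b
  isProb := ⟨bmeas_univ a b ha ha1 hb hb1⟩
  hyp := fun i x => if i = 0 then x.1 else x.2
  hyp_measurable := fun _ => Measurable.of_discrete
  prior := fun i => if i = 0 then 1/10 else 9/10
  prior_nonneg := fun i => by by_cases h : i = 0 <;> simp [h] <;> norm_num
  prior_le_one := fun i => by by_cases h : i = 0 <;> simp [h] <;> norm_num
  prior_tsum_le_one := by
    rw [tsum_fintype]
    rw [Fin.sum_univ_two]
    norm_num
    rw [← ENNReal.ofReal_add (by norm_num) (by norm_num)]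
    norm_num

end MDLaux

namespace MDLaux

variable (a b : ℝ) (ha : 0 ≤ a) (ha1 : a ≤ 1) (hb : 0 ≤ b) (hb1 : b ≤ 1)

lemma setup_prior0 : (setup a b ha ha1 hb hb1).prior 0 = 1/10 := by simp [setup]

lemma setup_prior1 : (setup a b ha ha1 hb hb1).prior 1 = 9/10 := by norm_num [setup]

lemma setup_desc0 : (setup a b ha ha1 hb hb1).desc 0 = Real.logb 2 10 := by
  rw [LearningSetup.desc, setup_prior0, one_div, Real.logb_inv, neg_neg]

lemma setup_desc1 : (setup a b ha ha1 hb hb1).desc 1 = Real.logb 2 (10/9) := by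
  rw [LearningSetup.desc, setup_prior1, show (9/10:ℝ) = (10/9)⁻¹ by norm_num,
    Real.logb_inv, neg_neg]

lemma setup_popErr0 : (setup a b ha ha1 hb hb1).popErr 0 = a := by
  have hset : {p : (Bool×Bool)×Bool | (setup a b ha ha1 hb hb1).hyp 0 p.1 ≠ p.2}
      = {p : (Bool×Bool)×Bool | p.1.1 ≠ p.2} := by
    simp [setup]
  rw [LearningSetup.popErr, hset]
  show ((bmeas a b) _).toReal = a
  rw [bmeas_err0 a b ha hb hb1, ENNReal.toReal_ofReal ha]

lemma setup_popErr1 : (setup a b ha ha1 hb hb1).popErr 1 = b := by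
  have hset : {p : (Bool×Bool)×Bool | (setup a b ha ha1 hb hb1).hyp 1 p.1 ≠ p.2}
      = {p : (Bool×Bool)×Bool | p.1.2 ≠ p.2} := by
    simp [setup]
  rw [LearningSetup.popErr, hset]
  show ((bmeas a b) _).toReal = b
  rw [bmeas_err1 a b ha ha1 hb, ENNReal.toReal_ofReal hb]

lemma setup_count (m : ℕ) (S : Fin m → (Bool×Bool)×Bool) :
    ((setup a b ha ha1 hb hb1).errCount m 1 S : ℝ)
      = ∑ t : Fin m, ({p : (Bool×Bool)×Bool | p.1.2 ≠ p.2}).indicator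
          (1 : ((Bool×Bool)×Bool) → ℝ) (S t) := by
  classical
  have hhyp : ∀ x : Bool×Bool, (setup a b ha ha1 hb hb1).hyp 1 x = x.2 := fun x => by
    simp [setup]
  rw [LearningSetup.errCount]
  simp only [hhyp]
  rw [Finset.card_filter]
  push_cast
  refine Finset.sum_congr rfl fun t _ => ?_
  by_cases h : (S t).1.2 ≠ (S t).2 <;>
    simp [h, Set.indicator_apply, Set.mem_setOf_eq]

lemma errCount_le {X I : Type} [MeasurableSpace X] (L : LearningSetup X I)
    (m : ℕ) (i : I) (S : Fin m → X × Bool) : L.errCount m i S ≤ m := by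
  classical
  exact (Finset.card_filter_le _ _).trans_eq (by simp)

lemma setup_J_lt (m : ℕ) (hm : 1 ≤ m) (lam : ℝ) (hlam : 10 * (m:ℝ) ≤ lam)
    (S : Fin m → (Bool×Bool)×Bool) :
    (setup a b ha ha1 hb hb1).J lam m 1 S < (setup a b ha ha1 hb hb1).J lam m 0 S := by
  classical
  have hk0 : (setup a b ha ha1 hb hb1).errCount m 0 S ≤ m := errCount_le _ m 0 S
  have hk1 : (setup a b ha ha1 hb hb1).errCount m 1 S ≤ m := errCount_le _ m 1 S
  have hc0 : (1:ℝ) ≤ (m.choose ((setup a b ha ha1 hb hb1).errCount m 0 S) : ℝ) := by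
    exact_mod_cast Nat.choose_pos hk0
  have hlog0 : 0 ≤ Real.logb 2 (m.choose ((setup a b ha ha1 hb hb1).errCount m 0 S) : ℝ) :=
    Real.logb_nonneg one_lt_two hc0
  have hc1pos : (1:ℝ) ≤ (m.choose ((setup a b ha ha1 hb hb1).errCount m 1 S) : ℝ) := by
    exact_mod_cast Nat.choose_pos hk1
  have hc1le : (m.choose ((setup a b ha ha1 hb hb1).errCount m 1 S) : ℝ) ≤ 2^m := by
    have : m.choose ((setup a b ha ha1 hb hb1).errCount m 1 S) ≤ 2^m := by
      calc m.choose ((setup a b ha ha1 hb hb1).errCount m 1 S)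
          ≤ ∑ j ∈ Finset.range (m+1), m.choose j :=
            Finset.single_le_sum (fun j _ => Nat.zero_le _)
              (Finset.mem_range.2 (Nat.lt_succ_of_le hk1))
        _ = 2^m := Nat.sum_range_choose m
    exact_mod_cast this
  have hlog1 : Real.logb 2 (m.choose ((setup a b ha ha1 hb hb1).errCount m 1 S) : ℝ) ≤ m := by
    calc Real.logb 2 (m.choose ((setup a b ha ha1 hb hb1).errCount m 1 S) : ℝ)
        ≤ Real.logb 2 ((2:ℝ)^m) := Real.logb_le_logb_of_le one_lt_two (by linarith) hc1le
      _ = m := by rw [Real.logb_pow]; simp [Real.logb_self_eq_one]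
  have h9 : (3:ℝ) ≤ Real.logb 2 9 := by
    have h8 : Real.logb 2 ((2:ℝ)^(3:ℕ)) = 3 := by
      rw [Real.logb_pow]; simp [Real.logb_self_eq_one]
    calc (3:ℝ) = Real.logb 2 ((2:ℝ)^(3:ℕ)) := h8.symm
      _ ≤ Real.logb 2 9 :=
        Real.logb_le_logb_of_le one_lt_two (by norm_num) (by norm_num)
  have hdiff : Real.logb 2 10 - Real.logb 2 (10/9) = Real.logb 2 9 := by
    rw [Real.logb_div (by norm_num) (by norm_num)]; ring
  have hmr : (1:ℝ) ≤ m := by exact_mod_cast hm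
  have hlampos : (0:ℝ) ≤ lam := by nlinarith
  have hmul : lam * 3 ≤ lam * Real.logb 2 9 := mul_le_mul_of_nonneg_left h9 hlampos
  have hlamdiff : lam * (Real.logb 2 10 - Real.logb 2 (10/9)) = lam * Real.logb 2 9 := by
    rw [hdiff]
  rw [LearningSetup.J, LearningSetup.J, setup_desc0, setup_desc1]
  nlinarith [hlog0, hlog1, hmul, hlamdiff, hmr, hlam]

end MDLaux

theorem mdl_overregularization
    (lam : ℕ → ℝ) (hpos : ∀ m, 0 < lam m)
    (hbig : ∃ c : ℝ, 10 < c ∧ ∀ᶠ m : ℕ in atTop, c ≤ lam m / m)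
    (Lstar : ℝ) (h1 : 0 ≤ Lstar) (h2 : Lstar < 1 / 2)
    (L' : ℝ) (h3 : Lstar ≤ L') (h4 : L' < 1 / 2) :
    ∃ (X : Type) (_ : MeasurableSpace X) (L : LearningSetup X (Fin 2)),
      L.prior 0 = 1 / 10 ∧ L.prior 1 = 9 / 10 ∧
      L.popErr 0 = Lstar ∧ L.popErr 1 = L' ∧
      ∀ A : (m : ℕ) → (Fin m → X × Bool) → Fin 2,
        (∀ m : ℕ, 1 ≤ m → L.IsMDLRule (lam m) m (A m)) →
        Tendsto (fun m : ℕ => L.expectedRisk m (A m)) atTop (nhds L') := by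
  classical
  have hb0 : 0 ≤ L' := h1.trans h3
  have ha1' : Lstar ≤ 1 := by linarith
  have hb1' : L' ≤ 1 := by linarith
  set LL := MDLaux.setup Lstar L' h1 ha1' hb0 hb1' with hLLdef
  haveI : IsProbabilityMeasure LL.D := LL.isProb
  refine ⟨Bool × Bool, inferInstance, LL,
    MDLaux.setup_prior0 Lstar L' h1 ha1' hb0 hb1',
    MDLaux.setup_prior1 Lstar L' h1 ha1' hb0 hb1',
    MDLaux.setup_popErr0 Lstar L' h1 ha1' hb0 hb1',
    MDLaux.setup_popErr1 Lstar L' h1 ha1' hb0 hb1', ?_⟩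
  intro A hA
  obtain ⟨c, hc10, hcev⟩ := hbig
  have hδ : (0:ℝ) < 1/2 - L' := by linarith
  set B : Set ((Bool×Bool)×Bool) := {p | p.1.2 ≠ p.2} with hBdef
  have hBmeas : MeasurableSet B := (Set.to_countable B).measurableSet
  have hDB : (LL.D B).toReal = L' := by
    show ((MDLaux.bmeas Lstar L') B).toReal = L'
    rw [hBdef]
    rw [MDLaux.bmeas_err1 Lstar L' h1 ha1' hb0, ENNReal.toReal_ofReal hb0]
  have hbound : ∀ᶠ m : ℕ in atTop,
      |LL.expectedRisk m (A m) - L'| ≤ 1 / (m * (1/2 - L')^2) := by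
    filter_upwards [hcev, eventually_ge_atTop 1] with m hcm hm1
    have hνdef : LL.sampleMeasure m = Measure.pi fun _ : Fin m => LL.D := rfl
    haveI : IsProbabilityMeasure (LL.sampleMeasure m) := by
      rw [hνdef]; infer_instance
    have hmpos : (0:ℝ) < m := by exact_mod_cast hm1
    have hlam : 10 * (m:ℝ) ≤ lam m := by
      have hcm' : c * m ≤ lam m := by
        rw [le_div_iff₀ hmpos] at hcm; linarith
      nlinarith
    have hbadmeas : MeasurableSet
        {S : Fin m → (Bool×Bool)×Bool |
          (m:ℝ)/2 < ∑ t : Fin m, B.indicator (1 : ((Bool×Bool)×Bool) → ℝ) (S t)} :=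
      (Finset.measurable_sum _ fun t _ => MDLaux.ind_meas B hBmeas t) measurableSet_Ioi
    have hcheb : ((LL.sampleMeasure m)
        {S : Fin m → (Bool×Bool)×Bool |
          (m:ℝ)/2 < ∑ t : Fin m, B.indicator (1 : ((Bool×Bool)×Bool) → ℝ) (S t)}).toReal
        ≤ 1/(m * (1/2 - L')^2) := by
      rw [hνdef]
      have hch := MDLaux.cheb (μ := LL.D) B hBmeas hm1 (by rw [hDB]; exact h4)
      rw [hDB] at hch
      exact hch
    obtain ⟨hAm, hae⟩ := hA m hm1
    have hcount : ∀ S : Fin m → (Bool×Bool)×Bool, ((LL.errCount m 1 S : ℝ))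
        = ∑ t : Fin m, B.indicator (1 : ((Bool×Bool)×Bool) → ℝ) (S t) := fun S =>
      MDLaux.setup_count Lstar L' h1 ha1' hb0 hb1' m S
    have hfin2 : ∀ i : Fin 2, i = 0 ∨ i = 1 := by decide
    have hgoodae : ∀ᵐ S ∂ LL.sampleMeasure m,
        |LL.popErr (A m S) - L'| ≤ Set.indicator
          {S' : Fin m → (Bool×Bool)×Bool |
            (m:ℝ)/2 < ∑ t : Fin m, B.indicator (1 : ((Bool×Bool)×Bool) → ℝ) (S' t)}
          (fun _ => (1:ℝ)) S := by
      filter_upwards [hae] with S hS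
      by_cases hSbad : (m:ℝ)/2 < ∑ t : Fin m, B.indicator (1 : ((Bool×Bool)×Bool) → ℝ) (S t)
      · have hmem : S ∈ {S' : Fin m → (Bool×Bool)×Bool |
            (m:ℝ)/2 < ∑ t : Fin m, B.indicator (1 : ((Bool×Bool)×Bool) → ℝ) (S' t)} := hSbad
        rw [Set.indicator_of_mem hmem]
        have hpop : LL.popErr (A m S) = Lstar ∨ LL.popErr (A m S) = L' := by
          rcases hfin2 (A m S) with h | h <;> rw [h]
          · exact Or.inl (MDLaux.setup_popErr0 Lstar L' h1 ha1' hb0 hb1')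
          · exact Or.inr (MDLaux.setup_popErr1 Lstar L' h1 ha1' hb0 hb1')
        rcases hpop with h | h <;> rw [h, abs_le] <;> constructor <;> linarith
      · have hmem : S ∉ {S' : Fin m → (Bool×Bool)×Bool |
            (m:ℝ)/2 < ∑ t : Fin m, B.indicator (1 : ((Bool×Bool)×Bool) → ℝ) (S' t)} := hSbad
        rw [Set.indicator_of_notMem hmem]
        have hemp : LL.empErr m 1 S ≤ 1/2 := by
          rw [LearningSetup.empErr, div_le_iff₀ hmpos]
          push_neg at hSbad
          rw [hcount S]
          linarith
        have hA1 : A m S = 1 := by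
          rcases hfin2 (A m S) with h | h
          · exfalso
            have hJle := hS.2 1 hemp
            rw [h] at hJle
            exact absurd hJle (not_le.2
              (MDLaux.setup_J_lt Lstar L' h1 ha1' hb0 hb1' m hm1 (lam m) hlam S))
          · exact h
        rw [hA1, MDLaux.setup_popErr1 Lstar L' h1 ha1' hb0 hb1']
        simp
    have hpop01 : ∀ i : Fin 2, 0 ≤ LL.popErr i ∧ LL.popErr i ≤ 1 := by
      intro i
      rcases hfin2 i with h | h <;> rw [h]
      · rw [MDLaux.setup_popErr0 Lstar L' h1 ha1' hb0 hb1']; exact ⟨h1, ha1'⟩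
      · rw [MDLaux.setup_popErr1 Lstar L' h1 ha1' hb0 hb1']; exact ⟨hb0, hb1'⟩
    have hf : Integrable (fun S => LL.popErr (A m S)) (LL.sampleMeasure m) := by
      rw [hνdef]
      refine MDLaux.bdd_integrable LL.D
        ((@measurable_from_top (Fin 2) ℝ _ LL.popErr).comp hAm) 1 fun S => ?_
      rw [abs_of_nonneg (hpop01 (A m S)).1]
      exact (hpop01 (A m S)).2
    have hind : Integrable (Set.indicator
          {S' : Fin m → (Bool×Bool)×Bool |
            (m:ℝ)/2 < ∑ t : Fin m, B.indicator (1 : ((Bool×Bool)×Bool) → ℝ) (S' t)}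
          (fun _ => (1:ℝ))) (LL.sampleMeasure m) :=
      (integrable_const (1:ℝ)).indicator hbadmeas
    have hrisk : LL.expectedRisk m (A m) - L'
        = ∫ S, (LL.popErr (A m S) - L') ∂ LL.sampleMeasure m := by
      rw [LearningSetup.expectedRisk, integral_sub hf (integrable_const _), integral_const]
      simp
    rw [hrisk]
    calc |∫ S, (LL.popErr (A m S) - L') ∂ LL.sampleMeasure m|
        ≤ ∫ S, |LL.popErr (A m S) - L'| ∂ LL.sampleMeasure m := by
          simpa [Real.norm_eq_abs] using
            norm_integral_le_integral_norm (μ := LL.sampleMeasure m)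
              (fun S => LL.popErr (A m S) - L')
      _ ≤ ∫ S, Set.indicator
            {S' : Fin m → (Bool×Bool)×Bool |
              (m:ℝ)/2 < ∑ t : Fin m, B.indicator (1 : ((Bool×Bool)×Bool) → ℝ) (S' t)}
            (fun _ => (1:ℝ)) S ∂ LL.sampleMeasure m :=
          integral_mono_ae ((hf.sub (integrable_const _)).abs) hind hgoodae
      _ = ((LL.sampleMeasure m)
            {S' : Fin m → (Bool×Bool)×Bool |
              (m:ℝ)/2 < ∑ t : Fin m, B.indicator (1 : ((Bool×Bool)×Bool) → ℝ) (S' t)}).toReal := by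
          rw [integral_indicator_const _ hbadmeas]; simp [measureReal_def]
      _ ≤ 1/(m * (1/2 - L')^2) := hcheb
  have h0 : Tendsto (fun m : ℕ => 1 / (m * (1/2 - L')^2)) atTop (nhds 0) := by
    have h := tendsto_one_div_atTop_nhds_zero_nat.mul_const (1/(1/2 - L')^2)
    have heq : (fun n : ℕ => 1/(n:ℝ) * (1/(1/2-L')^2)) = fun n : ℕ => 1/((n:ℝ)*(1/2-L')^2) := by
      funext n; rw [div_mul_div_comm, one_mul]
    rw [heq] at h
    simpa using h
  have hz : Tendsto (fun m : ℕ => LL.expectedRisk m (A m) - L') atTop (nhds 0) :=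
    squeeze_zero_norm' (hbound.mono fun m hm => by simpa [Real.norm_eq_abs] using hm) h0
  have := hz.add (tendsto_const_nhds (x := L') (f := atTop))
  simpa using this
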